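/- Let p be a prime, let m > n ≥ 1 and i ≥ 1 be integers, and let j be a positive integer not divisible by p. Suppose that (m−n)·i ≥ n and that Σ_{h=0}^{i−2} (s_p(m,h,j) − s_p(n,h,j)) ≥ s_p(n,i−1,j). Then Σ_{h=0}^{i−1} (s_p(m,h,j) − s_p(n,h,j)) ≥ s_p(n,i,j). -/
import Mathlib


/-- `sP p m i j` is the number of integers `k ≥ 0` with `p^k * j ≤ m * (i+1)`. -/
def sP (p m i j : ℕ) : ℕ :=
  ((Finset.range (m * (i + 1))).filter (fun k => p ^ k * j ≤ m * (i + 1))).card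

lemma sP_mono (p m n i i' j : ℕ) (h : n * (i + 1) ≤ m * (i' + 1)) :
    sP p n i j ≤ sP p m i' j := by
  apply Finset.card_le_card
  intro k hk
  simp only [Finset.mem_filter, Finset.mem_range] at hk ⊢
  exact ⟨lt_of_lt_of_le hk.1 h, le_trans hk.2 h⟩

/-- Lemma (stayszero): if `(m−n)·i ≥ n` (i.e. `i ≥ n/(m−n)`) and the valuation inequality
holds at `i−1`, then it also holds at `i`. -/
theorem stayszero (p m n i j : ℕ) (hp : p.Prime) (hmn : m > n) (hn : 1 ≤ n) (hi : 1 ≤ i)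
    (hj : 0 < j) (hpj : ¬ p ∣ j) (hin : (m - n) * i ≥ n)
    (hprev : (sP p n (i - 1) j : ℤ) ≤
      ∑ h ∈ Finset.range (i - 1), ((sP p m h j : ℤ) - (sP p n h j : ℤ))) :
    (sP p n i j : ℤ) ≤
      ∑ h ∈ Finset.range i, ((sP p m h j : ℤ) - (sP p n h j : ℤ)) := by
  obtain ⟨i', rfl⟩ : ∃ i', i = i' + 1 := ⟨i - 1, (Nat.succ_pred_eq_of_pos hi).symm⟩
  rw [Finset.sum_range_succ]
  simp only [Nat.add_sub_cancel] at hprev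
  have key : sP p n (i' + 1) j ≤ sP p m i' j := by
    apply sP_mono
    have : n * (i' + 1 + 1) = n * (i' + 1) + n := by ring
    rw [this]
    have h2 : n * (i' + 1) + n ≤ n * (i' + 1) + (m - n) * (i' + 1) := by
      exact Nat.add_le_add_left hin _
    refine le_trans h2 ?_
    rw [← Nat.add_mul, Nat.add_sub_cancel' (le_of_lt hmn)]
  have : (sP p n (i' + 1) j : ℤ) ≤ sP p m i' j := by exact_mod_cast key
  linarith
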